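/- Let p be a prime and k ≥ 2 an integer. The group homomorphism from PSL₂(ℤ/p^kℤ) to PSL₂(ℤ/p^(k−1)ℤ) induced by entrywise reduction of matrices modulo p^(k−1) is surjective, and its kernel has cardinality p³ if p^k ≠ 4 and cardinality 4 if p^k = 4. -/

import Mathlib

/-- `SL₂(R)`: the group of 2×2 matrices over `R` of determinant 1. -/
abbrev SL2 (R : Type*) [CommRing R] := Matrix.SpecialLinearGroup (Fin 2) R

/-- The subgroup `{I, -I}` of `SL₂(R)`. -/
def pmOne (R : Type*) [CommRing R] : Subgroup (SL2 R) := Subgroup.zpowers (-1 : SL2 R)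

instance pmOne_normal (R : Type*) [CommRing R] : (pmOne R).Normal := by
  constructor
  intro x hx g
  obtain ⟨k, rfl⟩ := Subgroup.mem_zpowers_iff.mp hx
  have hc : Commute ((-1 : SL2 R) ^ k) g := (Commute.neg_one_left g).zpow_left k
  have : g * (-1 : SL2 R) ^ k * g⁻¹ = (-1 : SL2 R) ^ k := by
    rw [← hc.eq, mul_assoc, mul_inv_cancel, mul_one]
  rw [this]
  exact hx

/-- `PSL₂(R)`: the quotient of `SL₂(R)` by the subgroup `{I, -I}`. -/
def PSL2 (R : Type*) [CommRing R] := SL2 R ⧸ pmOne R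

noncomputable instance (R : Type*) [CommRing R] : Group (PSL2 R) :=
  inferInstanceAs (Group (SL2 R ⧸ pmOne R))

/-- Entrywise reduction `SL₂(ℤ/Mℤ) → SL₂(ℤ/Nℤ)` for `N ∣ M`. -/
def SL2reduce (M N : ℕ) (h : N ∣ M) : SL2 (ZMod M) →* SL2 (ZMod N) :=
  Matrix.SpecialLinearGroup.map (ZMod.castHom h (ZMod N))

lemma SL2reduce_neg_one (M N : ℕ) (h : N ∣ M) :
    SL2reduce M N h (-1) = -1 := by
  apply Subtype.ext
  show (ZMod.castHom h (ZMod N)).mapMatrix ((-1 : SL2 (ZMod M)) : Matrix (Fin 2) (Fin 2) (ZMod M)) = _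
  rw [Matrix.SpecialLinearGroup.coe_neg, Matrix.SpecialLinearGroup.coe_one, map_neg, map_one,
    Matrix.SpecialLinearGroup.coe_neg, Matrix.SpecialLinearGroup.coe_one]

/-- The induced homomorphism `PSL₂(ℤ/Mℤ) → PSL₂(ℤ/Nℤ)` for `N ∣ M`. -/
def PSL2reduce (M N : ℕ) (h : N ∣ M) : PSL2 (ZMod M) →* PSL2 (ZMod N) :=
  QuotientGroup.map (pmOne (ZMod M)) (pmOne (ZMod N)) (SL2reduce M N h) (by
    intro x hx
    obtain ⟨k, rfl⟩ := Subgroup.mem_zpowers_iff.mp hx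
    rw [Subgroup.mem_comap, map_zpow, SL2reduce_neg_one]
    exact Subgroup.zpow_mem _ (Subgroup.mem_zpowers _) k)

set_option linter.unusedSectionVars false

section zmodAux
variable (M N : ℕ) [NeZero M] [NeZero N] (h : N ∣ M)

lemma cast_eq_zero_iff' (x : ZMod M) : ZMod.castHom h (ZMod N) x = 0 ↔ N ∣ x.val := by
  rw [ZMod.castHom_apply, ← ZMod.natCast_val, ZMod.natCast_eq_zero_iff]

lemma cast_lift (y : ZMod N) : ZMod.castHom h (ZMod N) ((y.val : ℕ) : ZMod M) = y := by
  rw [map_natCast, ZMod.natCast_val, ZMod.cast_id]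

lemma mul_eq_zero_of_cast_zero (h2 : M ∣ N ^ 2) (x y : ZMod M)
    (hx : ZMod.castHom h (ZMod N) x = 0) (hy : ZMod.castHom h (ZMod N) y = 0) : x * y = 0 := by
  rw [cast_eq_zero_iff'] at hx hy
  obtain ⟨a, ha⟩ := hx; obtain ⟨b, hb⟩ := hy
  have hxx : x = ((N * a : ℕ) : ZMod M) := by rw [← ha, ZMod.natCast_val, ZMod.cast_id]
  have hyy : y = ((N * b : ℕ) : ZMod M) := by rw [← hb, ZMod.natCast_val, ZMod.cast_id]
  rw [hxx, hyy, ← Nat.cast_mul, ZMod.natCast_eq_zero_iff]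
  calc M ∣ N ^ 2 := h2
    _ ∣ N * a * (N * b) := ⟨a * b, by ring⟩

lemma SL2reduce_surjective (h2 : M ∣ N ^ 2) : Function.Surjective (SL2reduce M N h) := by
  intro B
  set A' : Matrix (Fin 2) (Fin 2) (ZMod M) :=
    Matrix.of fun i j => (((B : Matrix (Fin 2) (Fin 2) (ZMod N)) i j).val : ZMod M) with hA'
  have hmap : (ZMod.castHom h (ZMod N)).mapMatrix A' = (B : Matrix (Fin 2) (Fin 2) (ZMod N)) := by
    ext i j
    simp [hA', cast_lift]
  obtain ⟨d, hd⟩ : ∃ d, A'.det = d := ⟨_, rfl⟩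
  have hd1 : (ZMod.castHom h (ZMod N)) d = 1 := by
    rw [← hd, RingHom.map_det, hmap, B.2]
  have hce : (ZMod.castHom h (ZMod N)) (d - 1) = 0 := by
    rw [map_sub, hd1, map_one, sub_self]
  have he2 : (d - 1) * (d - 1) = 0 := mul_eq_zero_of_cast_zero M N h h2 _ _ hce hce
  have hdu : d * (1 - (d - 1)) = 1 := by linear_combination -he2
  set C : Matrix (Fin 2) (Fin 2) (ZMod M) := !![1 - (d - 1), 0; 0, 1] with hC
  have hdet : (A' * C).det = 1 := by
    rw [Matrix.det_mul, hC, Matrix.det_fin_two_of, hd]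
    rw [mul_one, mul_zero, sub_zero]
    exact hdu
  refine ⟨⟨A' * C, hdet⟩, ?_⟩
  apply Subtype.ext
  show (ZMod.castHom h (ZMod N)).mapMatrix (A' * C) = _
  rw [map_mul, hmap]
  have h10 : (ZMod.castHom h (ZMod N)) (1 - (d - 1)) = 1 := by
    rw [map_sub, hce, sub_zero, map_one]
  have hCmap : (ZMod.castHom h (ZMod N)).mapMatrix C = 1 := by
    rw [hC, Matrix.one_fin_two]
    ext i j
    fin_cases i <;> fin_cases j <;>
      simp only [RingHom.mapMatrix_apply, Matrix.map_apply, Matrix.cons_val', Matrix.cons_val_zero,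
        Matrix.cons_val_one, Matrix.head_cons, Matrix.empty_val', Matrix.cons_val_fin_one,
        Matrix.head_fin_const] <;>
      simp [h10, ZMod.cast_one h]
  rw [hCmap, mul_one]

end zmodAux

section kerCount
variable (M N p : ℕ) [NeZero M] [NeZero N] (h : N ∣ M)

lemma card_ker_SL2reduce (hM : M = N * p) (h2 : M ∣ N ^ 2) :
    Nat.card (MonoidHom.ker (SL2reduce M N h)) = p ^ 3 := by
  haveI : NeZero p := ⟨by rintro rfl; exact (NeZero.ne M) (by omega)⟩
  have hNpos : 0 < N := Nat.pos_of_ne_zero (NeZero.ne N)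
  have hNN : (N : ZMod M) * (N : ZMod M) = 0 := by
    rw [← Nat.cast_mul, ZMod.natCast_eq_zero_iff]
    simpa [pow_two] using h2
  -- the lift of a trace-zero matrix
  set L : Matrix (Fin 2) (Fin 2) (ZMod p) → Matrix (Fin 2) (Fin 2) (ZMod M) :=
    fun B => 1 + Matrix.of (fun i j => (N : ZMod M) * (((B i j).val : ℕ) : ZMod M)) with hL
  have hLentry : ∀ B i j, L B i j =
      (1 : Matrix (Fin 2) (Fin 2) (ZMod M)) i j + (N : ZMod M) * (((B i j).val : ℕ) : ZMod M) :=
    fun B i j => rfl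
  have hNsum : ∀ B : Matrix (Fin 2) (Fin 2) (ZMod p), B.trace = 0 →
      (N : ZMod M) * ((((B 0 0).val : ℕ) : ZMod M) + (((B 1 1).val : ℕ) : ZMod M)) = 0 := by
    intro B hB
    have hps : (p : ℕ) ∣ (B 0 0).val + (B 1 1).val := by
      rw [← ZMod.natCast_eq_zero_iff, Nat.cast_add, ZMod.natCast_val, ZMod.natCast_val,
        ZMod.cast_id, ZMod.cast_id, ← Matrix.trace_fin_two, hB]
    obtain ⟨m, hm⟩ := hps
    rw [← Nat.cast_add, ← Nat.cast_mul, hm, ← mul_assoc, ← hM, ZMod.natCast_eq_zero_iff]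
    exact Dvd.intro m rfl
  have hdetL : ∀ B : Matrix (Fin 2) (Fin 2) (ZMod p), B.trace = 0 → (L B).det = 1 := by
    intro B hB
    rw [Matrix.det_fin_two]
    rw [hLentry, hLentry, hLentry, hLentry]
    simp only [Matrix.one_apply_eq, Matrix.one_apply_ne (by decide : (0 : Fin 2) ≠ 1),
      Matrix.one_apply_ne (by decide : (1 : Fin 2) ≠ 0), zero_add]
    have h1 := hNsum B hB
    linear_combination ((((B 0 0).val : ℕ) : ZMod M) * (((B 1 1).val : ℕ) : ZMod M)
      - (((B 0 1).val : ℕ) : ZMod M) * (((B 1 0).val : ℕ) : ZMod M)) * hNN + h1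
  have hmapL : ∀ B : Matrix (Fin 2) (Fin 2) (ZMod p),
      (ZMod.castHom h (ZMod N)).mapMatrix (L B) = 1 := by
    intro B
    rw [hL]
    simp only [map_add, map_one]
    have : (ZMod.castHom h (ZMod N)).mapMatrix
        (Matrix.of (fun i j => (N : ZMod M) * (((B i j).val : ℕ) : ZMod M))) = 0 := by
      ext i j
      simp only [RingHom.mapMatrix_apply, Matrix.map_apply, Matrix.of_apply, Matrix.zero_apply,
        map_mul, map_natCast, ZMod.natCast_self, zero_mul]
    rw [this, add_zero]
  -- the map from trace-zero matrices into the kernel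
  set f : {B : Matrix (Fin 2) (Fin 2) (ZMod p) // B.trace = 0} →
      MonoidHom.ker (SL2reduce M N h) :=
    fun B => ⟨⟨L B.1, hdetL B.1 B.2⟩, by
      apply MonoidHom.mem_ker.mpr
      apply Subtype.ext
      show (ZMod.castHom h (ZMod N)).mapMatrix (L B.1) = _
      rw [hmapL, Matrix.SpecialLinearGroup.coe_one]⟩ with hf
  have hinj : Function.Injective f := by
    intro B B' hBB
    have hmat : L B.1 = L B'.1 := by
      have h1 : (f B).1.1 = (f B').1.1 := by rw [hBB]
      exact h1
    apply Subtype.ext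
    ext i j
    have h2 := congrFun (congrFun hmat i) j
    rw [hLentry, hLentry] at h2
    have h3 : (N : ZMod M) * (((B.1 i j).val : ℕ) : ZMod M)
        = (N : ZMod M) * (((B'.1 i j).val : ℕ) : ZMod M) := by
      exact add_left_cancel h2
    rw [← Nat.cast_mul, ← Nat.cast_mul] at h3
    have hlt : N * (B.1 i j).val < M := by
      rw [hM]; exact (Nat.mul_lt_mul_left hNpos).mpr (ZMod.val_lt _)
    have hlt' : N * (B'.1 i j).val < M := by
      rw [hM]; exact (Nat.mul_lt_mul_left hNpos).mpr (ZMod.val_lt _)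
    have h4 : N * (B.1 i j).val = N * (B'.1 i j).val := by
      have := congrArg ZMod.val h3
      rwa [ZMod.val_natCast_of_lt hlt, ZMod.val_natCast_of_lt hlt'] at this
    have h5 : (B.1 i j).val = (B'.1 i j).val := Nat.eq_of_mul_eq_mul_left hNpos h4
    exact ZMod.val_injective _ h5
  have hsurj : Function.Surjective f := by
    rintro ⟨A, hA⟩
    rw [MonoidHom.mem_ker] at hA
    have hAmat : (ZMod.castHom h (ZMod N)).mapMatrix (A : Matrix (Fin 2) (Fin 2) (ZMod M))
        = (1 : Matrix (Fin 2) (Fin 2) (ZMod N)) := by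
      have h1 := Subtype.ext_iff.mp hA
      rw [Matrix.SpecialLinearGroup.coe_one] at h1
      exact h1
    -- entries of A - 1 are killed by the cast
    set x : Fin 2 → Fin 2 → ZMod M :=
      fun i j => (A : Matrix (Fin 2) (Fin 2) (ZMod M)) i j
        - (1 : Matrix (Fin 2) (Fin 2) (ZMod M)) i j with hx
    have hcx : ∀ i j, ZMod.castHom h (ZMod N) (x i j) = 0 := by
      intro i j
      rw [hx]
      simp only [map_sub]
      have h1 := congrFun (congrFun hAmat i) j
      rw [RingHom.mapMatrix_apply, Matrix.map_apply] at h1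
      rw [h1]
      rcases eq_or_ne i j with rfl | hij
      · simp [ZMod.cast_one h]
      · simp [Matrix.one_apply_ne hij]
    have hdvd : ∀ i j, N ∣ (x i j).val := fun i j =>
      (cast_eq_zero_iff' M N h _).mp (hcx i j)
    set B : Matrix (Fin 2) (Fin 2) (ZMod p) :=
      Matrix.of (fun i j => (((x i j).val / N : ℕ) : ZMod p)) with hB
    have hc1 : ∀ i j, (N : ZMod M) * (((B i j).val : ℕ) : ZMod M) = x i j := by
      intro i j
      have hvlt : (x i j).val / N < p := by
        rw [Nat.div_lt_iff_lt_mul hNpos, mul_comm p N, ← hM]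
        exact ZMod.val_lt _
      have hBval : (B i j).val = (x i j).val / N := by
        rw [hB]
        show ((((x i j).val / N : ℕ) : ZMod p)).val = _
        exact ZMod.val_natCast_of_lt hvlt
      rw [hBval, ← Nat.cast_mul, Nat.mul_div_cancel' (hdvd i j), ZMod.natCast_val, ZMod.cast_id]
    have hAentry : ∀ i j, (A : Matrix (Fin 2) (Fin 2) (ZMod M)) i j
        = (1 : Matrix (Fin 2) (Fin 2) (ZMod M)) i j + x i j := by
      intro i j; rw [hx]; ring
    have hx2 : ∀ i j i' j', x i j * x i' j' = 0 := fun i j i' j' =>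
      mul_eq_zero_of_cast_zero M N h h2 _ _ (hcx i j) (hcx i' j')
    have hsum0 : x 0 0 + x 1 1 = 0 := by
      have hdet : (A : Matrix (Fin 2) (Fin 2) (ZMod M)).det = 1 := A.2
      rw [Matrix.det_fin_two, hAentry, hAentry, hAentry, hAentry] at hdet
      simp only [Matrix.one_apply_eq, Matrix.one_apply_ne (by decide : (0 : Fin 2) ≠ 1),
        Matrix.one_apply_ne (by decide : (1 : Fin 2) ≠ 0), zero_add] at hdet
      have e1 := hx2 0 0 1 1
      have e2 := hx2 0 1 1 0
      linear_combination hdet - e1 + e2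
    have hBtr : B.trace = 0 := by
      have h6 : (N : ZMod M) * ((((B 0 0).val : ℕ) : ZMod M) + (((B 1 1).val : ℕ) : ZMod M))
          = 0 := by
        rw [mul_add, hc1, hc1, hsum0]
      rw [mul_add, ← Nat.cast_mul, ← Nat.cast_mul, ← Nat.cast_add, ← Nat.mul_add,
        ZMod.natCast_eq_zero_iff, hM] at h6
      have h7 : p ∣ (B 0 0).val + (B 1 1).val :=
        (Nat.mul_dvd_mul_iff_left hNpos).mp h6
      have h8 : ((((B 0 0).val + (B 1 1).val : ℕ)) : ZMod p) = 0 := by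
        rw [ZMod.natCast_eq_zero_iff]; exact h7
      rw [Nat.cast_add, ZMod.natCast_val, ZMod.natCast_val, ZMod.cast_id, ZMod.cast_id] at h8
      rw [Matrix.trace_fin_two]; exact h8
    refine ⟨⟨B, hBtr⟩, ?_⟩
    apply Subtype.ext
    apply Subtype.ext
    show L B = (A : Matrix (Fin 2) (Fin 2) (ZMod M))
    ext i j
    rw [hLentry, hc1, ← hAentry]
  have hcard : Nat.card {B : Matrix (Fin 2) (Fin 2) (ZMod p) // B.trace = 0} = p ^ 3 := by
    have e : {B : Matrix (Fin 2) (Fin 2) (ZMod p) // B.trace = 0}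
        ≃ ZMod p × ZMod p × ZMod p :=
      { toFun := fun B => (B.1 0 0, B.1 0 1, B.1 1 0)
        invFun := fun x => ⟨!![x.1, x.2.1; x.2.2, -x.1], by
          simp [Matrix.trace_fin_two]⟩
        left_inv := by
          rintro ⟨B, hB⟩
          apply Subtype.ext
          show !![B 0 0, B 0 1; B 1 0, -(B 0 0)] = B
          rw [Matrix.trace_fin_two] at hB
          have h11 : -(B 0 0) = B 1 1 := by linear_combination -hB
          rw [h11, ← Matrix.eta_fin_two B]
        right_inv := fun x => rfl }
    rw [Nat.card_congr e]
    simp only [Nat.card_prod, Nat.card_zmod]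
    ring
  rw [← Nat.card_eq_of_bijective f ⟨hinj, hsurj⟩, hcard]
end kerCount

section pmOneCard

lemma card_pmOne_of_two_lt (n : ℕ) [NeZero n] (hn : 2 < n) :
    Nat.card (pmOne (ZMod n)) = 2 := by
  rw [pmOne, Nat.card_zpowers]
  have hne : (-1 : SL2 (ZMod n)) ≠ 1 := by
    intro hcon
    have h0 : ((-1 : SL2 (ZMod n)) : Matrix (Fin 2) (Fin 2) (ZMod n)) 0 0
        = ((1 : SL2 (ZMod n)) : Matrix (Fin 2) (Fin 2) (ZMod n)) 0 0 := by rw [hcon]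
    rw [Matrix.SpecialLinearGroup.coe_neg, Matrix.SpecialLinearGroup.coe_one] at h0
    simp only [Matrix.neg_apply, Matrix.one_apply_eq] at h0
    have h2 : ((2 : ℕ) : ZMod n) = 0 := by
      push_cast
      linear_combination -h0
    rw [ZMod.natCast_eq_zero_iff] at h2
    exact absurd (Nat.le_of_dvd (by norm_num) h2) (by omega)
  have hsq : (-1 : SL2 (ZMod n)) ^ 2 = 1 := by rw [neg_one_sq]
  exact orderOf_eq_prime hsq hne

lemma neg_one_eq_one_mod_two : (-1 : SL2 (ZMod 2)) = 1 := by
  apply Subtype.ext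
  rw [Matrix.SpecialLinearGroup.coe_neg, Matrix.SpecialLinearGroup.coe_one]
  ext i j
  rw [Matrix.neg_apply]
  exact (CharTwo.neg_eq _)

lemma card_pmOne_two : Nat.card (pmOne (ZMod 2)) = 1 := by
  rw [pmOne, neg_one_eq_one_mod_two, Subgroup.zpowers_one_eq_bot, Subgroup.card_bot]

end pmOneCard

section pslKer
variable (M N : ℕ) [NeZero M] [NeZero N] (h : N ∣ M)

lemma card_ker_PSL2reduce_mul (hsurj : Function.Surjective (SL2reduce M N h)) :
    Nat.card (MonoidHom.ker (PSL2reduce M N h)) * Nat.card (pmOne (ZMod M))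
      = Nat.card (MonoidHom.ker (SL2reduce M N h)) * Nat.card (pmOne (ZMod N)) := by
  classical
  set mkM : SL2 (ZMod M) →* PSL2 (ZMod M) := QuotientGroup.mk' (pmOne (ZMod M)) with hmkM
  set φ : SL2 (ZMod M) →* PSL2 (ZMod N) := (PSL2reduce M N h).comp mkM with hφ
  have hφ_apply : ∀ A : SL2 (ZMod M),
      φ A = QuotientGroup.mk' (pmOne (ZMod N)) (SL2reduce M N h A) := by
    intro A
    show PSL2reduce M N h (mkM A) = _
    rw [hmkM]
    exact QuotientGroup.map_mk' _ _ _ _ A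
  set K' : Subgroup (SL2 (ZMod M)) := φ.ker with hK'
  have hK'mem : ∀ A : SL2 (ZMod M), A ∈ K' ↔ SL2reduce M N h A ∈ pmOne (ZMod N) := by
    intro A
    rw [hK', MonoidHom.mem_ker, hφ_apply]
    exact QuotientGroup.eq_one_iff _
  -- pmOne (ZMod M) ≤ K'
  have hle1 : pmOne (ZMod M) ≤ K' := by
    intro x hx
    rw [hK', MonoidHom.mem_ker, hφ_apply]
    obtain ⟨z, rfl⟩ := Subgroup.mem_zpowers_iff.mp hx
    rw [map_zpow, SL2reduce_neg_one]
    exact (QuotientGroup.eq_one_iff _).mpr (Subgroup.zpow_mem _ (Subgroup.mem_zpowers _) z)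
  -- ker (SL2reduce) ≤ K'
  have hle2 : MonoidHom.ker (SL2reduce M N h) ≤ K' := by
    intro x hx
    rw [hK'mem, MonoidHom.mem_ker.mp hx]
    exact Subgroup.one_mem _
  -- first count : via the map K' → ker (PSL2reduce)
  have count1 : Nat.card K'
      = Nat.card (MonoidHom.ker (PSL2reduce M N h)) * Nat.card (pmOne (ZMod M)) := by
    have hmem : ∀ a : K', mkM a.1 ∈ MonoidHom.ker (PSL2reduce M N h) := by
      intro a
      rw [MonoidHom.mem_ker]
      exact a.2
    set ψ : K' →* MonoidHom.ker (PSL2reduce M N h) :=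
      (mkM.comp K'.subtype).codRestrict _ hmem with hψ
    have hψsurj : Function.Surjective ψ := by
      rintro ⟨q, hq⟩
      obtain ⟨A, rfl⟩ := QuotientGroup.mk'_surjective (pmOne (ZMod M)) q
      have hAK : A ∈ K' := hq
      exact ⟨⟨A, hAK⟩, rfl⟩
    have hψker : ψ.ker = (pmOne (ZMod M)).subgroupOf K' := by
      ext a
      rw [MonoidHom.mem_ker, Subgroup.mem_subgroupOf]
      constructor
      · intro ha
        have := Subtype.ext_iff.mp ha
        exact (QuotientGroup.eq_one_iff _).mp this
      · intro ha
        apply Subtype.ext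
        exact (QuotientGroup.eq_one_iff _).mpr ha
    rw [Subgroup.card_eq_card_quotient_mul_card_subgroup ψ.ker]
    congr 1
    · exact Nat.card_congr (QuotientGroup.quotientKerEquivOfSurjective ψ hψsurj).toEquiv
    · rw [hψker]
      exact Nat.card_congr (Subgroup.subgroupOfEquivOfLe hle1).toEquiv
  -- second count : via the map K' → pmOne (ZMod N)
  have count2 : Nat.card K'
      = Nat.card (MonoidHom.ker (SL2reduce M N h)) * Nat.card (pmOne (ZMod N)) := by
    have hmem : ∀ a : K', SL2reduce M N h a.1 ∈ pmOne (ZMod N) := fun a =>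
      (hK'mem a.1).mp a.2
    set χ : K' →* pmOne (ZMod N) :=
      ((SL2reduce M N h).comp K'.subtype).codRestrict _ hmem with hχ
    have hχsurj : Function.Surjective χ := by
      rintro ⟨y, hy⟩
      obtain ⟨z, rfl⟩ := Subgroup.mem_zpowers_iff.mp hy
      obtain ⟨A, hA⟩ := hsurj (-1)
      have hAK : A ∈ K' := by
        rw [hK'mem, hA]
        exact Subgroup.mem_zpowers _
      refine ⟨⟨A, hAK⟩ ^ z, ?_⟩
      apply Subtype.ext
      show SL2reduce M N h ((A : SL2 (ZMod M)) ^ z) = (-1) ^ z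
      rw [map_zpow, hA]
    have hχker : χ.ker = (MonoidHom.ker (SL2reduce M N h)).subgroupOf K' := by
      ext a
      rw [MonoidHom.mem_ker, Subgroup.mem_subgroupOf, MonoidHom.mem_ker]
      constructor
      · intro ha
        exact Subtype.ext_iff.mp ha
      · intro ha
        exact Subtype.ext ha
    rw [Subgroup.card_eq_card_quotient_mul_card_subgroup χ.ker]
    rw [mul_comm]
    congr 1
    · rw [hχker]
      exact Nat.card_congr (Subgroup.subgroupOfEquivOfLe hle2).toEquiv
    · exact Nat.card_congr (QuotientGroup.quotientKerEquivOfSurjective χ hχsurj).toEquiv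
  rw [← count1, count2]

end pslKer
/-- For a prime `p` and `k ≥ 2`, the homomorphism
`PSL₂(ℤ/p^kℤ) → PSL₂(ℤ/p^(k-1)ℤ)` induced by entrywise reduction modulo `p^(k-1)`
is surjective, and its kernel has cardinality `p³`, unless `p^k = 4`, in which
case it has cardinality `4`. -/
theorem stmt0 (p k : ℕ) (hp : p.Prime) (hk : 2 ≤ k) :
    Function.Surjective (PSL2reduce (p ^ k) (p ^ (k - 1)) (pow_dvd_pow p (Nat.sub_le k 1))) ∧
    Nat.card (MonoidHom.ker (PSL2reduce (p ^ k) (p ^ (k - 1)) (pow_dvd_pow p (Nat.sub_le k 1))))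
      = if p ^ k = 4 then 4 else p ^ 3 := by
  have hp2 : 2 ≤ p := hp.two_le
  haveI : NeZero (p ^ k) := ⟨pow_ne_zero _ hp.pos.ne'⟩
  haveI : NeZero (p ^ (k - 1)) := ⟨pow_ne_zero _ hp.pos.ne'⟩
  have hM : p ^ k = p ^ (k - 1) * p := by
    rw [← pow_succ]
    congr 1
    omega
  have h2 : p ^ k ∣ (p ^ (k - 1)) ^ 2 := by
    rw [← pow_mul]
    exact pow_dvd_pow p (by omega)
  have hsurjSL := SL2reduce_surjective (p ^ k) (p ^ (k - 1))
    (pow_dvd_pow p (Nat.sub_le k 1)) h2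
  constructor
  · intro y
    obtain ⟨B, rfl⟩ := QuotientGroup.mk'_surjective (pmOne (ZMod (p ^ (k - 1)))) y
    obtain ⟨A, rfl⟩ := hsurjSL B
    exact ⟨QuotientGroup.mk' (pmOne (ZMod (p ^ k))) A,
      QuotientGroup.map_mk' _ _ _ _ A⟩
  · have hker := card_ker_SL2reduce (p ^ k) (p ^ (k - 1)) p
      (pow_dvd_pow p (Nat.sub_le k 1)) hM h2
    have hmul := card_ker_PSL2reduce_mul (p ^ k) (p ^ (k - 1))
      (pow_dvd_pow p (Nat.sub_le k 1)) hsurjSL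
    have hMgt : 2 < p ^ k := by
      have h4 : 2 ^ 2 ≤ p ^ k :=
        (Nat.pow_le_pow_left hp2 2).trans (Nat.pow_le_pow_right (by omega) hk)
      omega
    rw [card_pmOne_of_two_lt _ hMgt, hker] at hmul
    by_cases h4 : p ^ k = 4
    · have hpd : p ∣ 4 := by
        rw [← h4]
        exact dvd_pow_self p (by omega)
      have hp2e : p = 2 := by
        have h22 : (4 : ℕ) = 2 ^ 2 := by norm_num
        rw [h22] at hpd
        exact (Nat.prime_dvd_prime_iff_eq hp Nat.prime_two).mp (hp.dvd_of_dvd_pow hpd)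
      have hk2e : k = 2 := by
        have hpe : p ^ k = p ^ 2 := by rw [h4, hp2e]; norm_num
        exact Nat.pow_right_injective hp2 hpe
      have hN2 : p ^ (k - 1) = 2 := by rw [hp2e, hk2e]; norm_num
      have hc1 : Nat.card (pmOne (ZMod (p ^ (k - 1)))) = 1 := by
        rw [hN2]
        exact card_pmOne_two
      have hp3 : p ^ 3 = 8 := by rw [hp2e]; norm_num
      rw [hc1, hp3, mul_one] at hmul
      rw [if_pos h4]
      omega
    · have hNgt : 2 < p ^ (k - 1) := by
        by_contra hcon
        push_neg at hcon
        have hge : p ≤ p ^ (k - 1) := Nat.le_self_pow (by omega) p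
        have hp2e : p = 2 := by omega
        rw [hp2e] at hcon
        have hk1 : k - 1 ≤ 1 := by
          have h21 : (2 : ℕ) ^ (k - 1) ≤ 2 ^ 1 := by rw [pow_one]; exact hcon
          exact (Nat.pow_le_pow_iff_right (by norm_num)).mp h21
        have hk2e : k = 2 := by omega
        exact h4 (by rw [hp2e, hk2e]; norm_num)
      rw [card_pmOne_of_two_lt _ hNgt] at hmul
      rw [if_neg h4]
      omega
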